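/- arXiv:1911.13165 — 2 statements merged into one kernel-verified Lean document; each statement's English description precedes it below -/
import Mathlib

section
/- Suppose ℓ is bi-Lipschitz in the space variable: there exist constants 0 < c ≤ C such that c|x−y| ≤ |ℓ(t,x) − ℓ(t,y)| ≤ C|x−y| for all t ∈ [0,T] and x, y ∈ ℝ, almost surely, and y ↦ ℓ(t,y) is strictly increasing. Then the operator L_t(X) = inf{ x ≥ 0 : E[ℓ(t,x+X)] ≥ 0 } satisfies the Lipschitz estimate |L_t(X) − L_t(Y)| ≤ (C/c) · E[|X − Y|] for all X, Y ∈ L². -/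
open MeasureTheory Set

private lemma aux_ineq (F G : ℝ → ℝ) (c C δ : ℝ) (hc : 0 < c) (hcC : c ≤ C) (hδ : 0 ≤ δ)
    (hFinc : ∀ x y : ℝ, x ≤ y → c * (y - x) ≤ F y - F x)
    (hGinc : ∀ x y : ℝ, x ≤ y → c * (y - x) ≤ G y - G x)
    (hFG : ∀ x : ℝ, |F x - G x| ≤ C * δ)
    (hFlip : ∀ x y : ℝ, |F x - F y| ≤ C * |x - y|) :
    sInf {x : ℝ | 0 ≤ x ∧ 0 ≤ G x} ≤ sInf {x : ℝ | 0 ≤ x ∧ 0 ≤ F x} + (C / c) * δ := by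
  have hC : 0 < C := hc.trans_le hcC
  set A := {x : ℝ | 0 ≤ x ∧ 0 ≤ F x} with hA
  set B := {x : ℝ | 0 ≤ x ∧ 0 ≤ G x} with hB
  have hAbdd : BddBelow A := ⟨0, fun x hx => hx.1⟩
  have hBbdd : BddBelow B := ⟨0, fun x hx => hx.1⟩
  have hAne : A.Nonempty := by
    refine ⟨max 0 ((1 - F 0) / c), le_max_left _ _, ?_⟩
    have h1 := hFinc 0 (max 0 ((1 - F 0) / c)) (le_max_left _ _)
    have h2 : (1 - F 0) / c ≤ max 0 ((1 - F 0) / c) := le_max_right _ _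
    rw [div_le_iff₀ hc] at h2
    nlinarith
  set a := sInf A with ha
  have ha0 : 0 ≤ a := le_csInf hAne fun x hx => hx.1
  have hFa : 0 ≤ F a := by
    have key : ∀ ε : ℝ, 0 < ε → (0:ℝ) ≤ F a + ε := by
      intro ε hε
      obtain ⟨x, hxA, hxlt⟩ :=
        exists_lt_of_csInf_lt hAne (lt_add_of_pos_right a (div_pos hε hC))
      have hax : a ≤ x := csInf_le hAbdd hxA
      have h1 : |F x - F a| ≤ C * |x - a| := hFlip x a
      have h2 : |x - a| ≤ ε / C := by
        rw [abs_of_nonneg (by linarith)]; linarith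
      have h3 : F x - F a ≤ C * (ε / C) := by
        calc F x - F a ≤ |F x - F a| := le_abs_self _
          _ ≤ C * |x - a| := h1
          _ ≤ C * (ε / C) := by nlinarith
      rw [mul_div_cancel₀ _ hC.ne'] at h3
      linarith [hxA.2]
    have := le_of_forall_pos_le_add key
    linarith
  have hk : 0 ≤ (C / c) * δ := mul_nonneg (div_nonneg hC.le hc.le) hδ
  have hmem : a + (C / c) * δ ∈ B := by
    refine ⟨by linarith, ?_⟩
    have h1 := hGinc a (a + (C / c) * δ) (by linarith)
    rw [add_sub_cancel_left] at h1
    have h2 : c * ((C / c) * δ) = C * δ := by field_simp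
    have h3 : F a - G a ≤ C * δ := (abs_le.mp (hFG a)).2
    linarith
  exact (csInf_le hBbdd hmem).trans (le_refl _)

/-- If `ℓ` is bi-Lipschitz in the space variable with constants `0 < c ≤ C` and strictly
increasing, then the reflection operator `L_t(X) = inf{x ≥ 0 : E[ℓ(t,x+X)] ≥ 0}` is
Lipschitz: `|L_t(X) - L_t(Y)| ≤ (C/c) E[|X - Y|]`. -/
theorem stmt1 {Ω : Type*} [MeasurableSpace Ω] (μ : Measure Ω) [IsProbabilityMeasure μ]
    (ℓ : Ω → ℝ → ℝ) (c C : ℝ) (hc : 0 < c) (hcC : c ≤ C)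
    (hmono : ∀ᵐ ω ∂μ, StrictMono (ℓ ω))
    (hcont : ∀ᵐ ω ∂μ, Continuous (ℓ ω))
    (hbilip : ∀ᵐ ω ∂μ, ∀ x y : ℝ,
      c * |x - y| ≤ |ℓ ω x - ℓ ω y| ∧ |ℓ ω x - ℓ ω y| ≤ C * |x - y|)
    (X Y : Ω → ℝ) (hX : MemLp X 2 μ) (hY : MemLp Y 2 μ)
    (hintX : ∀ x : ℝ, Integrable (fun ω => ℓ ω (x + X ω)) μ)
    (hintY : ∀ x : ℝ, Integrable (fun ω => ℓ ω (x + Y ω)) μ) :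
    |sInf {x : ℝ | 0 ≤ x ∧ 0 ≤ ∫ ω, ℓ ω (x + X ω) ∂μ} -
        sInf {x : ℝ | 0 ≤ x ∧ 0 ≤ ∫ ω, ℓ ω (x + Y ω) ∂μ}| ≤
      (C / c) * ∫ ω, |X ω - Y ω| ∂μ := by
  have hC : 0 < C := hc.trans_le hcC
  set F : ℝ → ℝ := fun x => ∫ ω, ℓ ω (x + X ω) ∂μ with hF
  set G : ℝ → ℝ := fun x => ∫ ω, ℓ ω (x + Y ω) ∂μ with hG
  set δ : ℝ := ∫ ω, |X ω - Y ω| ∂μ with hδdef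
  have hδ : 0 ≤ δ := integral_nonneg fun ω => abs_nonneg _
  have hXY : Integrable (fun ω => |X ω - Y ω|) μ :=
    ((hX.sub hY).integrable one_le_two).abs
  -- increment lower bound
  have hinc : ∀ (Z : Ω → ℝ), (∀ x : ℝ, Integrable (fun ω => ℓ ω (x + Z ω)) μ) →
      ∀ x y : ℝ, x ≤ y →
      c * (y - x) ≤ (∫ ω, ℓ ω (y + Z ω) ∂μ) - ∫ ω, ℓ ω (x + Z ω) ∂μ := by
    intro Z hint x y hxy
    rw [← integral_sub (hint y) (hint x)]
    have hpt : ∀ᵐ ω ∂μ, c * (y - x) ≤ ℓ ω (y + Z ω) - ℓ ω (x + Z ω) := by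
      filter_upwards [hmono, hbilip] with ω hm hb
      have h1 := (hb (y + Z ω) (x + Z ω)).1
      have h2 : ℓ ω (x + Z ω) ≤ ℓ ω (y + Z ω) :=
        hm.monotone (by linarith)
      have h3 : (y + Z ω) - (x + Z ω) = y - x := by ring
      rw [h3, abs_of_nonneg (by linarith), abs_of_nonneg (by linarith)] at h1
      exact h1
    calc c * (y - x) = ∫ _ω, c * (y - x) ∂μ := by
          simp [integral_const]
      _ ≤ _ := integral_mono_ae (integrable_const _) ((hint y).sub (hint x)) hpt
  -- Lipschitz bound for F and G in x
  have hlip : ∀ (Z : Ω → ℝ), (∀ x : ℝ, Integrable (fun ω => ℓ ω (x + Z ω)) μ) →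
      ∀ x y : ℝ,
      |(∫ ω, ℓ ω (x + Z ω) ∂μ) - ∫ ω, ℓ ω (y + Z ω) ∂μ| ≤ C * |x - y| := by
    intro Z hint x y
    rw [← integral_sub (hint x) (hint y)]
    refine le_trans (b := ∫ ω, |ℓ ω (x + Z ω) - ℓ ω (y + Z ω)| ∂μ) ?_ ?_
    · simpa [Real.norm_eq_abs] using
        norm_integral_le_integral_norm (μ := μ) (fun ω => ℓ ω (x + Z ω) - ℓ ω (y + Z ω))
    have hpt : ∀ᵐ ω ∂μ, |ℓ ω (x + Z ω) - ℓ ω (y + Z ω)| ≤ C * |x - y| := by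
      filter_upwards [hbilip] with ω hb
      have h1 := (hb (x + Z ω) (y + Z ω)).2
      have h3 : (x + Z ω) - (y + Z ω) = x - y := by ring
      rwa [h3] at h1
    calc (∫ ω, |ℓ ω (x + Z ω) - ℓ ω (y + Z ω)| ∂μ) ≤ ∫ _ω, C * |x - y| ∂μ :=
          integral_mono_ae ((hint x).sub (hint y)).abs (integrable_const _) hpt
      _ = C * |x - y| := by simp [integral_const]
  -- closeness of F and G
  have hFG : ∀ x : ℝ, |F x - G x| ≤ C * δ := by
    intro x
    rw [hF, hG, ← integral_sub (hintX x) (hintY x)]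
    refine le_trans (b := ∫ ω, |ℓ ω (x + X ω) - ℓ ω (x + Y ω)| ∂μ) ?_ ?_
    · simpa [Real.norm_eq_abs] using
        norm_integral_le_integral_norm (μ := μ) (fun ω => ℓ ω (x + X ω) - ℓ ω (x + Y ω))
    have hpt : ∀ᵐ ω ∂μ, |ℓ ω (x + X ω) - ℓ ω (x + Y ω)| ≤ C * |X ω - Y ω| := by
      filter_upwards [hbilip] with ω hb
      have h1 := (hb (x + X ω) (x + Y ω)).2
      have h3 : (x + X ω) - (x + Y ω) = X ω - Y ω := by ring
      rwa [h3] at h1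
    calc (∫ ω, |ℓ ω (x + X ω) - ℓ ω (x + Y ω)| ∂μ)
        ≤ ∫ ω, C * |X ω - Y ω| ∂μ :=
          integral_mono_ae ((hintX x).sub (hintY x)).abs (hXY.const_mul C) hpt
      _ = C * δ := by rw [integral_const_mul]
  have hGF : ∀ x : ℝ, |G x - F x| ≤ C * δ := fun x => by
    rw [abs_sub_comm]; exact hFG x
  have h1 := aux_ineq F G c C δ hc hcC hδ (hinc X hintX) (hinc Y hintY) hFG (hlip X hintX)
  have h2 := aux_ineq G F c C δ hc hcC hδ (hinc Y hintY) (hinc X hintX) hGF (hlip Y hintY)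
  rw [abs_sub_le_iff]
  constructor <;> linarith
end

section
/- Let z₁, z₂ : [0,T] → [0,∞) be measurable with ∫₀ᵀ zᵢ(s)² ds ≤ A² for i = 1,2, and let α ∈ [0,1). Then ∫₀ᵀ (1 + z₁(s)^α + z₂(s)^α) |z₁(s) − z₂(s)| ds ≤ √(3T + 6 T^{1−α} A^{2α}) · (∫₀ᵀ |z₁(s) − z₂(s)|² ds)^{1/2}. -/
open MeasureTheory Set

private lemma memLp_of_int {μ : Measure ℝ} {f : ℝ → ℝ} (hf : AEStronglyMeasurable f μ)
    {q : ℝ} (hq : 0 < q) (h : Integrable (fun x => |f x| ^ q) μ) :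
    MemLp f (ENNReal.ofReal q) μ := by
  have hQ0 : ENNReal.ofReal q ≠ 0 := by
    simp [ENNReal.ofReal_eq_zero, not_le, hq]
  have hQt : ENNReal.ofReal q ≠ ⊤ := ENNReal.ofReal_ne_top
  refine (memLp_norm_rpow_iff (p := ENNReal.ofReal q) hf hQ0 hQt).mp ?_
  rw [ENNReal.div_self hQ0 hQt, memLp_one_iff_integrable]
  simpa [ENNReal.toReal_ofReal hq.le, Real.norm_eq_abs] using h

private lemma int_rpow_aux {T A α : ℝ} (hT : 0 ≤ T) (hA : 0 < A) (hα0 : 0 ≤ α) (hα1 : α < 1)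
    {z : ℝ → ℝ} (hz : ∀ s, 0 ≤ z s) (hm : Measurable z)
    (hint : IntegrableOn (fun s => z s ^ (2 : ℝ)) (Set.Ioc 0 T))
    (hA1 : ∫ s in Set.Ioc (0 : ℝ) T, z s ^ (2 : ℝ) ≤ A ^ 2) :
    IntegrableOn (fun s => z s ^ (2 * α)) (Set.Ioc 0 T) ∧
      (∫ s in Set.Ioc (0 : ℝ) T, z s ^ (2 * α)) ≤ T ^ (1 - α) * A ^ (2 * α) := by
  have hfin : volume (Set.Ioc (0 : ℝ) T) < ⊤ := by
    simp [Real.volume_Ioc]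
  have hmeas : Measurable fun s => z s ^ (2 * α) := hm.pow_const _
  have hpt : ∀ s, z s ^ (2 * α) ≤ 1 + z s ^ (2 : ℝ) := by
    intro s
    rcases le_total (z s) 1 with h1 | h1
    · have := Real.rpow_le_one (hz s) h1 (by positivity : (0:ℝ) ≤ 2 * α)
      have h2 : (0:ℝ) ≤ z s ^ (2 : ℝ) := Real.rpow_nonneg (hz s) _
      linarith
    · have := Real.rpow_le_rpow_of_exponent_le h1 (by linarith : 2 * α ≤ 2)
      have h2 : (0:ℝ) ≤ z s ^ (2 * α) := Real.rpow_nonneg (hz s) _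
      linarith
  have hint2α : IntegrableOn (fun s => z s ^ (2 * α)) (Set.Ioc 0 T) := by
    refine Integrable.mono' ((integrableOn_const (C := (1:ℝ)) hfin.ne).add hint)
      hmeas.aestronglyMeasurable ?_
    filter_upwards with s
    rw [Real.norm_eq_abs, abs_of_nonneg (Real.rpow_nonneg (hz s) _)]
    exact hpt s
  refine ⟨hint2α, ?_⟩
  rcases eq_or_lt_of_le hα0 with rfl | hα0'
  · simp only [mul_zero, Real.rpow_zero, sub_zero, Real.rpow_one]
    rw [setIntegral_const]
    simp [Real.volume_Ioc, ENNReal.toReal_ofReal hT, hT]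
  · have hpq : Real.HolderConjugate (1 / α) (1 / (1 - α)) := by
      rw [Real.holderConjugate_iff]
      constructor
      · rw [lt_div_iff₀ hα0']; linarith
      · rw [one_div, one_div, inv_inv, inv_inv]; ring
    haveI : IsFiniteMeasure (volume.restrict (Set.Ioc (0 : ℝ) T)) :=
      ⟨by rwa [Measure.restrict_apply_univ]⟩
    have hf : MemLp (fun s => z s ^ (2 * α)) (ENNReal.ofReal (1 / α))
        (volume.restrict (Set.Ioc (0 : ℝ) T)) := by
      refine memLp_of_int hmeas.aestronglyMeasurable (one_div_pos.mpr hα0') ?_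
      have he : ∀ s, |z s ^ (2 * α)| ^ (1 / α) = z s ^ (2 : ℝ) := by
        intro s
        rw [abs_of_nonneg (Real.rpow_nonneg (hz s) _), ← Real.rpow_mul (hz s),
          mul_one_div, mul_div_assoc, div_self hα0'.ne', mul_one]
      simpa only [he] using hint.integrable
    have hg : MemLp (fun _ : ℝ => (1 : ℝ)) (ENNReal.ofReal (1 / (1 - α)))
        (volume.restrict (Set.Ioc (0 : ℝ) T)) := memLp_const 1
    have key := MeasureTheory.integral_mul_le_Lp_mul_Lq_of_nonneg hpq
      (Filter.Eventually.of_forall fun s => Real.rpow_nonneg (hz s) _)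
      (Filter.Eventually.of_forall fun _ => zero_le_one) hf hg
    simp only [mul_one, one_div, inv_inv] at key
    have e1 : ∀ s : ℝ, (z s ^ (2 * α)) ^ α⁻¹ = z s ^ (2 : ℝ) := by
      intro s
      rw [← Real.rpow_mul (hz s), mul_assoc, mul_inv_cancel₀ hα0'.ne', mul_one]
    rw [show (fun a => (z a ^ (2*α)) ^ α⁻¹) = fun a => z a ^ (2:ℝ) from funext e1] at key
    simp only [Real.one_rpow, setIntegral_const, smul_eq_mul, mul_one] at key
    calc (∫ s in Set.Ioc (0 : ℝ) T, z s ^ (2 * α))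
        ≤ (∫ s in Set.Ioc (0:ℝ) T, z s ^ (2:ℝ)) ^ α *
            ((volume (Set.Ioc (0:ℝ) T)).toReal) ^ (1-α) := key
      _ ≤ T ^ (1 - α) * A ^ (2 * α) := by
          rw [show (volume (Set.Ioc (0:ℝ) T)).toReal = T by
            simp [Real.volume_Ioc, ENNReal.toReal_ofReal hT]]
          have h1 : (∫ s in Set.Ioc (0:ℝ) T, z s ^ (2:ℝ)) ^ α ≤ (A ^ 2) ^ α :=
            Real.rpow_le_rpow (integral_nonneg fun s => Real.rpow_nonneg (hz s) _) hA1 hα0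
          have h2 : ((A ^ 2 : ℝ)) ^ α = A ^ (2 * α) := by
            rw [← Real.rpow_natCast A 2, ← Real.rpow_mul hA.le]; norm_num
          have hTα : (0:ℝ) ≤ T ^ (1-α) := Real.rpow_nonneg hT _
          calc (∫ s in Set.Ioc (0:ℝ) T, z s ^ (2:ℝ)) ^ α * T ^ (1-α)
              ≤ (A^2) ^ α * T ^ (1-α) := mul_le_mul_of_nonneg_right h1 hTα
            _ = T ^ (1-α) * A ^ (2*α) := by rw [h2, mul_comm]

/-- Key Hölder estimate (13q): for nonnegative `z₁, z₂` with `∫₀ᵀ zᵢ² ≤ A²` and `α ∈ [0,1)`,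
`∫₀ᵀ (1 + z₁^α + z₂^α)|z₁ - z₂| ds ≤ √(3T + 6T^{1-α}A^{2α}) (∫₀ᵀ |z₁-z₂|² ds)^{1/2}`. -/
theorem stmt6 (T A α : ℝ) (hT : 0 ≤ T) (hA : 0 < A) (hα : α ∈ Set.Ico (0 : ℝ) 1)
    (z₁ z₂ : ℝ → ℝ) (hz₁ : ∀ s, 0 ≤ z₁ s) (hz₂ : ∀ s, 0 ≤ z₂ s)
    (hm₁ : Measurable z₁) (hm₂ : Measurable z₂)
    (hint₁ : IntegrableOn (fun s => z₁ s ^ (2 : ℝ)) (Set.Ioc 0 T))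
    (hint₂ : IntegrableOn (fun s => z₂ s ^ (2 : ℝ)) (Set.Ioc 0 T))
    (hA₁ : ∫ s in Set.Ioc (0 : ℝ) T, z₁ s ^ (2 : ℝ) ≤ A ^ 2)
    (hA₂ : ∫ s in Set.Ioc (0 : ℝ) T, z₂ s ^ (2 : ℝ) ≤ A ^ 2) :
    ∫ s in Set.Ioc (0 : ℝ) T, (1 + z₁ s ^ α + z₂ s ^ α) * |z₁ s - z₂ s| ≤
      Real.sqrt (3 * T + 6 * T ^ (1 - α) * A ^ (2 * α)) *
        Real.sqrt (∫ s in Set.Ioc (0 : ℝ) T, |z₁ s - z₂ s| ^ 2) := by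
  obtain ⟨hα0, hα1⟩ := hα
  obtain ⟨hI₁, hB₁⟩ := int_rpow_aux hT hA hα0 hα1 hz₁ hm₁ hint₁ hA₁
  obtain ⟨hI₂, hB₂⟩ := int_rpow_aux hT hA hα0 hα1 hz₂ hm₂ hint₂ hA₂
  have hfin : volume (Set.Ioc (0 : ℝ) T) < ⊤ := by simp [Real.volume_Ioc]
  haveI : IsFiniteMeasure (volume.restrict (Set.Ioc (0 : ℝ) T)) :=
    ⟨by rwa [Measure.restrict_apply_univ]⟩
  set f : ℝ → ℝ := fun s => 1 + z₁ s ^ α + z₂ s ^ α with hf_def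
  set g : ℝ → ℝ := fun s => |z₁ s - z₂ s| with hg_def
  have hmf : Measurable f := (measurable_const.add (hm₁.pow_const _)).add (hm₂.pow_const _)
  have hmg : Measurable g := (hm₁.sub hm₂).abs
  have hfnn : ∀ s, 0 ≤ f s := fun s => by
    have h1 := Real.rpow_nonneg (hz₁ s) α; have h2 := Real.rpow_nonneg (hz₂ s) α
    simp only [hf_def]; linarith
  have hgnn : ∀ s, 0 ≤ g s := fun s => abs_nonneg _
  -- pointwise bound for f²
  have hfsq : ∀ s, f s ^ (2:ℝ) ≤ 3 * (1 + z₁ s ^ (2*α) + z₂ s ^ (2*α)) := by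
    intro s
    rw [Real.rpow_two]
    have e₁ : z₁ s ^ (2*α) = (z₁ s ^ α) ^ 2 := by
      rw [← Real.rpow_natCast (z₁ s ^ α) 2, ← Real.rpow_mul (hz₁ s)]; norm_num; ring_nf
    have e₂ : z₂ s ^ (2*α) = (z₂ s ^ α) ^ 2 := by
      rw [← Real.rpow_natCast (z₂ s ^ α) 2, ← Real.rpow_mul (hz₂ s)]; norm_num; ring_nf
    rw [e₁, e₂]
    have h1 : 0 ≤ z₁ s ^ α := Real.rpow_nonneg (hz₁ s) _
    have h2 : 0 ≤ z₂ s ^ α := Real.rpow_nonneg (hz₂ s) _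
    simp only [hf_def]
    nlinarith [sq_nonneg (z₁ s ^ α - z₂ s ^ α), sq_nonneg (z₁ s ^ α - 1), sq_nonneg (z₂ s ^ α - 1)]
  have hIf : IntegrableOn (fun s => f s ^ (2:ℝ)) (Set.Ioc 0 T) := by
    refine Integrable.mono'
      ((((integrableOn_const (C := (1:ℝ)) hfin.ne).add hI₁).add hI₂).const_mul 3)
      ((hmf.pow_const _).aestronglyMeasurable) ?_
    filter_upwards with s
    rw [Real.norm_eq_abs, abs_of_nonneg (Real.rpow_nonneg (hfnn s) _)]
    exact hfsq s
  -- pointwise bound for g²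
  have hgsq : ∀ s, g s ^ (2:ℝ) ≤ 2 * (z₁ s ^ (2:ℝ) + z₂ s ^ (2:ℝ)) := by
    intro s
    rw [Real.rpow_two, Real.rpow_two, Real.rpow_two]
    simp only [hg_def, sq_abs]
    nlinarith [sq_nonneg (z₁ s + z₂ s)]
  have hIg : IntegrableOn (fun s => g s ^ (2:ℝ)) (Set.Ioc 0 T) := by
    refine Integrable.mono' ((hint₁.add hint₂).const_mul 2)
      ((hmg.pow_const _).aestronglyMeasurable) ?_
    filter_upwards with s
    rw [Real.norm_eq_abs, abs_of_nonneg (Real.rpow_nonneg (hgnn s) _)]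
    exact hgsq s
  have hpq : Real.HolderConjugate 2 2 := Real.holderConjugate_iff.mpr ⟨one_lt_two, by norm_num⟩
  have hMf : MemLp f (ENNReal.ofReal 2) (volume.restrict (Set.Ioc (0:ℝ) T)) := by
    refine memLp_of_int hmf.aestronglyMeasurable two_pos ?_
    have : ∀ s, |f s| ^ (2:ℝ) = f s ^ (2:ℝ) := fun s => by rw [abs_of_nonneg (hfnn s)]
    simpa only [this] using hIf.integrable
  have hMg : MemLp g (ENNReal.ofReal 2) (volume.restrict (Set.Ioc (0:ℝ) T)) := by
    refine memLp_of_int hmg.aestronglyMeasurable two_pos ?_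
    have : ∀ s, |g s| ^ (2:ℝ) = g s ^ (2:ℝ) := fun s => by rw [abs_of_nonneg (hgnn s)]
    simpa only [this] using hIg.integrable
  have key := MeasureTheory.integral_mul_le_Lp_mul_Lq_of_nonneg hpq
    (Filter.Eventually.of_forall hfnn) (Filter.Eventually.of_forall hgnn) hMf hMg
  refine key.trans ?_
  -- now bound each factor
  have hT' : (volume (Set.Ioc (0:ℝ) T)).toReal = T := by
    simp [Real.volume_Ioc, ENNReal.toReal_ofReal hT]
  have hIf2 : (∫ s in Set.Ioc (0:ℝ) T, f s ^ (2:ℝ)) ≤ 3 * T + 6 * T ^ (1-α) * A ^ (2*α) := by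
    have step1 : (∫ s in Set.Ioc (0:ℝ) T, f s ^ (2:ℝ)) ≤
        ∫ s in Set.Ioc (0:ℝ) T, 3 * (1 + z₁ s ^ (2*α) + z₂ s ^ (2*α)) := by
      refine integral_mono hIf ?_ hfsq
      exact ((((integrableOn_const (C := (1:ℝ)) hfin.ne).add hI₁).add hI₂).const_mul 3)
    have step2 : (∫ s in Set.Ioc (0:ℝ) T, 3 * (1 + z₁ s ^ (2*α) + z₂ s ^ (2*α)))
        = 3 * (T + (∫ s in Set.Ioc (0:ℝ) T, z₁ s ^ (2*α)) +
            (∫ s in Set.Ioc (0:ℝ) T, z₂ s ^ (2*α))) := by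
      have hc : Integrable (fun _ : ℝ => (1:ℝ)) (volume.restrict (Set.Ioc 0 T)) :=
        integrableOn_const (C := (1:ℝ)) hfin.ne
      have hc1 : Integrable (fun s => 1 + z₁ s ^ (2*α)) (volume.restrict (Set.Ioc 0 T)) := by
        exact hc.add hI₁
      rw [integral_const_mul, integral_add hc1 hI₂, integral_add hc hI₁, setIntegral_const]
      simp [hT', hT]
    refine step1.trans ?_
    rw [step2]
    linarith
  have hRnn : (0:ℝ) ≤ 3 * T + 6 * T ^ (1-α) * A ^ (2*α) := by
    have := Real.rpow_nonneg hT (1-α); have := Real.rpow_nonneg hA.le (2*α); positivity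
  have fact1 : (∫ s in Set.Ioc (0:ℝ) T, f s ^ (2:ℝ)) ^ (1/(2:ℝ)) ≤
      Real.sqrt (3 * T + 6 * T ^ (1-α) * A ^ (2*α)) := by
    rw [Real.sqrt_eq_rpow]
    exact Real.rpow_le_rpow (integral_nonneg fun s => Real.rpow_nonneg (hfnn s) _) hIf2
      (by norm_num)
  have fact2 : (∫ s in Set.Ioc (0:ℝ) T, g s ^ (2:ℝ)) ^ (1/(2:ℝ)) =
      Real.sqrt (∫ s in Set.Ioc (0:ℝ) T, |z₁ s - z₂ s| ^ 2) := by
    rw [Real.sqrt_eq_rpow]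
    congr 1
    refine integral_congr_ae (Filter.Eventually.of_forall fun s => ?_)
    show g s ^ (2:ℝ) = |z₁ s - z₂ s| ^ 2
    rw [Real.rpow_two]
  rw [fact2]
  exact mul_le_mul_of_nonneg_right fact1 (Real.sqrt_nonneg _)
end
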